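/- (Lemma 4.7) Let c ∈ ℝ and let (U, V₁, V₂) be a traveling wave solution with speed c connecting (a/b, aμ₁/(bλ₁), aμ₂/(bλ₂)) and (0,0,0): U, V₁, V₂ : ℝ → ℝ are bounded, U is nonnegative and C², V₁, V₂ are C², they satisfy 0 = U'' + cU' + (U·(χ₂V₂ − χ₁V₁)')' + U(a − bU) and 0 = Vᵢ'' + cτVᵢ' − λᵢVᵢ + μᵢU on ℝ (i = 1,2), and (U,V₁,V₂)(x) → (a/b, aμ₁/(bλ₁), aμ₂/(bλ₂)) as x → −∞ while (U,V₁,V₂)(x) → (0,0,0) and (V₁'(x), V₂'(x)) → (0,0) as x → +∞. Then there exists X₀ such that U is monotone decreasing on [X₀, ∞). -/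

import Mathlib

open Filter

open Set in
private lemma ev_right_of_deriv_neg {f : ℝ → ℝ} {d t : ℝ} (hf : HasDerivAt f d t)
    (hd : d < 0) : ∃ u, t < u ∧ ∀ s, t < s → s < u → f s < f t := by
  have h := hasDerivAt_iff_tendsto_slope.mp hf
  have h2 : ∀ᶠ s in nhdsWithin t {t}ᶜ, slope f t s < 0 := h.eventually_lt_const hd
  have hle : nhdsWithin t (Set.Ioi t) ≤ nhdsWithin t {t}ᶜ :=
    nhdsWithin_mono _ (fun s hs => by simpa using ne_of_gt hs)
  have h3 : ∀ᶠ s in nhdsWithin t (Set.Ioi t), f s < f t := by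
    filter_upwards [hle h2, self_mem_nhdsWithin] with s hs hst
    rw [slope_def_field] at hs
    have hst' : (0:ℝ) < s - t := sub_pos.mpr hst
    rcases div_neg_iff.mp hs with ⟨h1', h2'⟩ | ⟨h1', h2'⟩
    · linarith
    · linarith
  obtain ⟨u, hu, hsub⟩ := mem_nhdsGT_iff_exists_Ioo_subset.mp h3
  exact ⟨u, hu, fun s h1' h2' => hsub ⟨h1', h2'⟩⟩

open Set in
private lemma ev_left_of_deriv_neg {f : ℝ → ℝ} {d t : ℝ} (hf : HasDerivAt f d t)
    (hd : d < 0) : ∃ v, v < t ∧ ∀ s, v < s → s < t → f t < f s := by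
  have h := hasDerivAt_iff_tendsto_slope.mp hf
  have h2 : ∀ᶠ s in nhdsWithin t {t}ᶜ, slope f t s < 0 := h.eventually_lt_const hd
  have hle : nhdsWithin t (Set.Iio t) ≤ nhdsWithin t {t}ᶜ :=
    nhdsWithin_mono _ (fun s hs => by simpa using ne_of_lt hs)
  have h3 : ∀ᶠ s in nhdsWithin t (Set.Iio t), f t < f s := by
    filter_upwards [hle h2, self_mem_nhdsWithin] with s hs hst
    rw [slope_def_field] at hs
    have hst' : s - t < 0 := sub_neg.mpr hst
    rcases div_neg_iff.mp hs with ⟨h1', h2'⟩ | ⟨h1', h2'⟩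
    · linarith
    · linarith
  obtain ⟨v, hv, hsub⟩ := mem_nhdsLT_iff_exists_Ioo_subset.mp h3
  exact ⟨v, hv, fun s h1' h2' => hsub ⟨h1', h2'⟩⟩

open Set in
private lemma U_pos_aux {L : ℝ} {U P Q : ℝ → ℝ}
    (hPc : Continuous P) (hQc : Continuous Q)
    (hUd : Differentiable ℝ U) (hU'd : Differentiable ℝ (deriv U))
    (hU'c : Continuous (deriv U))
    (hode : ∀ x, deriv (deriv U) x = -(P x * deriv U x + Q x * U x))
    (hUnn : ∀ x, 0 ≤ U x) (hUbot : Tendsto U atBot (nhds L)) (hL : 0 < L) :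
    ∀ x, 0 < U x := by
  by_contra hcon
  push_neg at hcon
  obtain ⟨x₀, hx₀⟩ := hcon
  have hU0 : U x₀ = 0 := le_antisymm hx₀ (hUnn x₀)
  have hmin : IsLocalMin U x₀ := .of_forall fun y => by rw [hU0]; exact hUnn y
  have hU'0 : deriv U x₀ = 0 := hmin.deriv_eq_zero
  have key : ∀ x, x ≤ x₀ → U x = 0 := by
    intro x hx
    obtain ⟨M₁, hM₁⟩ := (isCompact_Icc (a := x) (b := x₀)).exists_bound_of_continuousOn
      hPc.continuousOn
    obtain ⟨M₂, hM₂⟩ := (isCompact_Icc (a := x) (b := x₀)).exists_bound_of_continuousOn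
      hQc.continuousOn
    set M := max M₁ M₂ with hMdef
    have hM0 : 0 ≤ M :=
      le_trans (norm_nonneg (P x)) (le_trans (hM₁ x ⟨le_rfl, hx⟩) (le_max_left _ _))
    set K := 1 + 3 * M with hKdef
    set h : ℝ → ℝ := fun t => U t ^ 2 + deriv U t ^ 2 with hhdef
    set g : ℝ → ℝ := fun t => h t * Real.exp (K * t) with hgdef
    have hh' : ∀ t, HasDerivAt h
        (2 * U t * deriv U t + 2 * deriv U t * deriv (deriv U) t) t := by
      intro t
      have h1 : HasDerivAt (fun s => U s ^ 2) (2 * U t * deriv U t) t := by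
        simpa [mul_comm] using ((hUd t).hasDerivAt).fun_pow 2
      have h2 : HasDerivAt (fun s => deriv U s ^ 2)
          (2 * deriv U t * deriv (deriv U) t) t := by
        simpa [mul_comm] using ((hU'd t).hasDerivAt).fun_pow 2
      exact h1.add h2
    have hexp' : ∀ t, HasDerivAt (fun s => Real.exp (K * s)) (Real.exp (K * t) * K) t := by
      intro t
      simpa using ((hasDerivAt_id t).const_mul K).exp
    have hg' : ∀ t, HasDerivAt g
        ((2 * U t * deriv U t + 2 * deriv U t * deriv (deriv U) t) * Real.exp (K * t)
          + h t * (Real.exp (K * t) * K)) t := fun t => (hh' t).mul (hexp' t)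
    have hgc : Continuous g :=
      (((hUd.continuous.pow 2).add (hU'c.pow 2)).mul
        (Real.continuous_exp.comp (continuous_const.mul continuous_id)))
    have hgmono : MonotoneOn g (Icc x x₀) := by
      apply monotoneOn_of_deriv_nonneg (convex_Icc _ _) hgc.continuousOn
        (fun t _ => ((hg' t).differentiableAt).differentiableWithinAt)
      intro t ht
      rw [interior_Icc] at ht
      have htI : t ∈ Icc x x₀ := Ioo_subset_Icc_self ht
      have hp := hM₁ t htI
      have hq := hM₂ t htI
      rw [Real.norm_eq_abs] at hp hq
      have hP1 : P t ≤ M := le_trans (le_abs_self _) (le_trans hp (le_max_left _ _))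
      have hP2 : -M ≤ P t := by
        have h1 : |P t| ≤ M := le_trans hp (le_max_left _ _)
        linarith [neg_abs_le (P t)]
      have hQ1 : Q t ≤ M := le_trans (le_abs_self _) (le_trans hq (le_max_right _ _))
      have hQ2 : -M ≤ Q t := by
        have h1 : |Q t| ≤ M := le_trans hq (le_max_right _ _)
        linarith [neg_abs_le (Q t)]
      rw [(hg' t).deriv, hode t]
      have hexp : 0 < Real.exp (K * t) := Real.exp_pos _
      set u := U t
      set v := deriv U t
      have hfac : (2 * u * v + 2 * v * -(P t * v + Q t * u)) * Real.exp (K * t)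
          + (u ^ 2 + v ^ 2) * (Real.exp (K * t) * K)
          = Real.exp (K * t) * (2*u*v - 2*P t*v^2 - 2*Q t*u*v + (1+3*M)*(u^2+v^2)) := by
        rw [hKdef]; ring
      rw [hfac]
      apply mul_nonneg hexp.le
      nlinarith [sq_nonneg (u+v), sq_nonneg (u-v), sq_nonneg u, sq_nonneg v,
        mul_nonneg (sub_nonneg.2 hP1) (sq_nonneg v),
        mul_nonneg (sub_nonneg.2 hQ1) (sq_nonneg (u+v)),
        mul_nonneg (by linarith : (0:ℝ) ≤ M + Q t) (sq_nonneg (u-v)),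
        mul_nonneg hM0 (sq_nonneg u)]
    have hgx : g x ≤ g x₀ := hgmono ⟨le_rfl, hx⟩ ⟨hx, le_rfl⟩ hx
    have hgx₀ : g x₀ = 0 := by simp [hgdef, hhdef, hU0, hU'0]
    have hgnn : 0 ≤ g x :=
      mul_nonneg (add_nonneg (sq_nonneg _) (sq_nonneg _)) (Real.exp_pos _).le
    have hhx : h x = 0 := by
      have : g x = 0 := le_antisymm (hgx₀ ▸ hgx) hgnn
      have hexp : Real.exp (K * x) ≠ 0 := (Real.exp_pos _).ne'
      exact (mul_eq_zero.mp this).resolve_right hexp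
    simp only [hhdef] at hhx
    have hU2 : U x ^ 2 = 0 := by nlinarith [sq_nonneg (U x), sq_nonneg (deriv U x)]
    exact sq_eq_zero_iff.mp hU2
  have hev : U =ᶠ[atBot] (fun _ => (0:ℝ)) := eventually_atBot.mpr ⟨x₀, key⟩
  have h1 : Tendsto (fun _ : ℝ => (0:ℝ)) atBot (nhds L) := hUbot.congr' hev
  have := tendsto_nhds_unique h1 tendsto_const_nhds
  linarith

open Set in
private lemma antitone_aux {U : ℝ → ℝ} {X₀ : ℝ}
    (hUc : Continuous U) (hUd : Differentiable ℝ U)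
    (hU'd : Differentiable ℝ (deriv U)) (hU'c : Continuous (deriv U))
    (hpos : ∀ x, 0 < U x) (hUtop : Tendsto U atTop (nhds 0))
    (hcrit : ∀ t, X₀ ≤ t → deriv U t = 0 → deriv (deriv U) t < 0) :
    ∃ X₁ : ℝ, AntitoneOn U (Set.Ici X₁) := by
  by_cases hT : ∃ T, X₀ ≤ T ∧ ∀ s, T < s → deriv U s ≠ 0
  · obtain ⟨T, hTX, hTne⟩ := hT
    have hle : ∀ s, T < s → deriv U s ≤ 0 := by
      intro s hs
      by_contra hgt
      push_neg at hgt
      have hex : ∃ s₂, s < s₂ ∧ deriv U s₂ < 0 := by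
        by_contra hno
        push_neg at hno
        have hmono : MonotoneOn U (Ici s) := by
          apply monotoneOn_of_deriv_nonneg (convex_Ici s) hUc.continuousOn
            hUd.differentiableOn
          intro t ht
          rw [interior_Ici] at ht
          exact hno t ht
        have h1 : U (s+1) ≤ 0 := by
          apply ge_of_tendsto hUtop
          filter_upwards [eventually_ge_atTop (s+1)] with t ht
          exact hmono (by simp : s ≤ s + 1) (le_trans (by linarith) ht : s ≤ t) ht
        linarith [hpos (s+1)]
      obtain ⟨s₂, hs₂, hneg⟩ := hex
      have h0mem : (0:ℝ) ∈ Icc (deriv U s₂) (deriv U s) := ⟨hneg.le, hgt.le⟩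
      obtain ⟨z, hz, hz0⟩ := intermediate_value_Icc' hs₂.le hU'c.continuousOn h0mem
      exact hTne z (lt_of_lt_of_le hs hz.1) hz0
    refine ⟨T+1, ?_⟩
    apply antitoneOn_of_deriv_nonpos (convex_Ici _) hUc.continuousOn hUd.differentiableOn
    intro t ht
    rw [interior_Ici] at ht
    exact hle t (by linarith [mem_Ioi.mp ht])
  · push_neg at hT
    obtain ⟨t₁, ht₁, hd₁⟩ := hT X₀ le_rfl
    obtain ⟨t₂, ht₂, hd₂⟩ := hT t₁ ht₁.le
    exfalso
    have hc₁ : deriv (deriv U) t₁ < 0 := hcrit t₁ ht₁.le hd₁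
    have hc₂ : deriv (deriv U) t₂ < 0 := hcrit t₂ (ht₁.le.trans ht₂.le) hd₂
    obtain ⟨u, hu, hru⟩ := ev_right_of_deriv_neg ((hU'd t₁).hasDerivAt) hc₁
    set m₁ := (t₁ + min u t₂)/2 with hm₁def
    have hmin1 : t₁ < min u t₂ := lt_min hu ht₂
    have hm₁a : t₁ < m₁ := by rw [hm₁def]; linarith
    have hm₁u : m₁ < min u t₂ := by rw [hm₁def]; linarith
    have hm₁t₂ : m₁ < t₂ := lt_of_lt_of_le hm₁u (min_le_right _ _)
    have hUs₁ : U m₁ < U t₁ := by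
      have hanti : StrictAntiOn U (Icc t₁ m₁) := by
        apply strictAntiOn_of_deriv_neg (convex_Icc _ _) hUc.continuousOn
        intro s hs
        rw [interior_Icc] at hs
        have h1 := hru s hs.1 (lt_trans hs.2 (lt_of_lt_of_le hm₁u (min_le_left _ _)))
        rw [hd₁] at h1
        exact h1
      exact hanti ⟨le_rfl, hm₁a.le⟩ ⟨hm₁a.le, le_rfl⟩ hm₁a
    obtain ⟨v, hv, hlv⟩ := ev_left_of_deriv_neg ((hU'd t₂).hasDerivAt) hc₂
    set m₂ := (max v t₁ + t₂)/2 with hm₂def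
    have hmax2 : max v t₁ < t₂ := max_lt hv ht₂
    have hm₂a : max v t₁ < m₂ := by rw [hm₂def]; linarith
    have hm₂b : m₂ < t₂ := by rw [hm₂def]; linarith
    have hUs₂ : U m₂ < U t₂ := by
      have hmono : StrictMonoOn U (Icc m₂ t₂) := by
        apply strictMonoOn_of_deriv_pos (convex_Icc _ _) hUc.continuousOn
        intro s hs
        rw [interior_Icc] at hs
        have h1 := hlv s (lt_of_le_of_lt (le_max_left v t₁) (lt_trans hm₂a hs.1)) hs.2
        rw [hd₂] at h1
        exact h1
      exact hmono ⟨le_rfl, hm₂b.le⟩ ⟨hm₂b.le, le_rfl⟩ hm₂b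
    obtain ⟨z, hzmem, hzmin⟩ := (isCompact_Icc (a := t₁) (b := t₂)).exists_isMinOn
      (nonempty_Icc.mpr ht₂.le) hUc.continuousOn
    have hzle := isMinOn_iff.mp hzmin
    have hm₂t₁ : t₁ < m₂ := lt_of_le_of_lt (le_max_right v t₁) hm₂a
    have hz₁ : t₁ < z := by
      rcases lt_or_eq_of_le hzmem.1 with h | h
      · exact h
      · exfalso
        have h2 := hzle m₁ ⟨hm₁a.le, hm₁t₂.le⟩
        rw [← h] at h2
        linarith
    have hz₂ : z < t₂ := by
      rcases lt_or_eq_of_le hzmem.2 with h | h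
      · exact h
      · exfalso
        have h2 := hzle m₂ ⟨hm₂t₁.le, hm₂b.le⟩
        rw [h] at h2
        linarith
    have hlocmin : IsLocalMin U z := hzmin.isLocalMin (Icc_mem_nhds hz₁ hz₂)
    have hz0 : deriv U z = 0 := hlocmin.deriv_eq_zero
    have hcz : deriv (deriv U) z < 0 := hcrit z (ht₁.le.trans hz₁.le) hz0
    obtain ⟨w, hw, hrw⟩ := ev_right_of_deriv_neg ((hU'd z).hasDerivAt) hcz
    set m₃ := (z + min w t₂)/2 with hm₃def
    have hmin3 : z < min w t₂ := lt_min hw hz₂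
    have hm₃a : z < m₃ := by rw [hm₃def]; linarith
    have hm₃b : m₃ < min w t₂ := by rw [hm₃def]; linarith
    have hUs₃ : U m₃ < U z := by
      have hanti : StrictAntiOn U (Icc z m₃) := by
        apply strictAntiOn_of_deriv_neg (convex_Icc _ _) hUc.continuousOn
        intro s hs
        rw [interior_Icc] at hs
        have h1 := hrw s hs.1 (lt_trans hs.2 (lt_of_lt_of_le hm₃b (min_le_left _ _)))
        rw [hz0] at h1
        exact h1
      exact hanti ⟨le_rfl, hm₃a.le⟩ ⟨hm₃a.le, le_rfl⟩ hm₃a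
    have h3 := hzle m₃ ⟨le_trans hz₁.le hm₃a.le,
      (lt_of_lt_of_le hm₃b (min_le_right _ _)).le⟩
    linarith

/-- Lemma 4.7: the profile U of a traveling wave connecting
(a/b, aμ₁/(bλ₁), aμ₂/(bλ₂)) and (0,0,0) is eventually monotone decreasing. -/
theorem stmt_18 (a b c τ χ₁ χ₂ lam₁ lam₂ μ₁ μ₂ : ℝ)
    (ha : 0 < a) (hb : 0 < b) (hτ : 0 < τ)
    (hχ₁ : 0 < χ₁) (hχ₂ : 0 < χ₂) (hlam₁ : 0 < lam₁) (hlam₂ : 0 < lam₂)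
    (hμ₁ : 0 < μ₁) (hμ₂ : 0 < μ₂)
    (U V₁ V₂ : ℝ → ℝ)
    (hUbd : ∃ C, ∀ x, |U x| ≤ C) (hV₁bd : ∃ C, ∀ x, |V₁ x| ≤ C)
    (hV₂bd : ∃ C, ∀ x, |V₂ x| ≤ C)
    (hUnn : ∀ x, 0 ≤ U x)
    (hU : ContDiff ℝ 2 U) (hV₁ : ContDiff ℝ 2 V₁) (hV₂ : ContDiff ℝ 2 V₂)
    (heqU : ∀ x : ℝ, 0 = deriv (deriv U) x + c * deriv U x +
        deriv (fun y => U y * deriv (fun z => χ₂ * V₂ z - χ₁ * V₁ z) y) x +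
        U x * (a - b * U x))
    (heqV₁ : ∀ x : ℝ, 0 = deriv (deriv V₁) x + c * τ * deriv V₁ x - lam₁ * V₁ x + μ₁ * U x)
    (heqV₂ : ∀ x : ℝ, 0 = deriv (deriv V₂) x + c * τ * deriv V₂ x - lam₂ * V₂ x + μ₂ * U x)
    (hUbot : Tendsto U atBot (nhds (a / b)))
    (hV₁bot : Tendsto V₁ atBot (nhds (a * μ₁ / (b * lam₁))))
    (hV₂bot : Tendsto V₂ atBot (nhds (a * μ₂ / (b * lam₂))))
    (hUtop : Tendsto U atTop (nhds 0))
    (hV₁top : Tendsto V₁ atTop (nhds 0))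
    (hV₂top : Tendsto V₂ atTop (nhds 0))
    (hV₁'top : Tendsto (deriv V₁) atTop (nhds 0))
    (hV₂'top : Tendsto (deriv V₂) atTop (nhds 0)) :
    ∃ X₀ : ℝ, AntitoneOn U (Set.Ici X₀) := by
  set W : ℝ → ℝ := fun z => χ₂ * V₂ z - χ₁ * V₁ z with hWdef
  have hWc : ContDiff ℝ 2 W := (contDiff_const.mul hV₂).sub (contDiff_const.mul hV₁)
  have hone : ((1:WithTop ℕ∞)+1) = 2 := by norm_num
  have hUd : Differentiable ℝ U := hU.differentiable (by norm_num)
  have hU'c1 : ContDiff ℝ 1 (deriv U) :=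
    (contDiff_succ_iff_deriv.mp (hone ▸ hU : ContDiff ℝ ((1:WithTop ℕ∞)+1) U)).2.2
  have hU'd : Differentiable ℝ (deriv U) := hU'c1.differentiable one_ne_zero
  have hU'c : Continuous (deriv U) := hU'c1.continuous
  have hW'c1 : ContDiff ℝ 1 (deriv W) :=
    (contDiff_succ_iff_deriv.mp (hone ▸ hWc : ContDiff ℝ ((1:WithTop ℕ∞)+1) W)).2.2
  have hW'd : Differentiable ℝ (deriv W) := hW'c1.differentiable one_ne_zero
  have hW'cont : Continuous (deriv W) := hW'c1.continuous
  have hW''c : Continuous (deriv (deriv W)) := hW'c1.continuous_deriv le_rfl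
  have hode : ∀ x, deriv (deriv U) x =
      -((c + deriv W x) * deriv U x + (deriv (deriv W) x + a - b * U x) * U x) := by
    intro x
    have hm : deriv (fun y => U y * deriv W y) x
        = deriv U x * deriv W x + U x * deriv (deriv W) x := deriv_mul (hUd x) (hW'd x)
    have h := heqU x
    rw [hm] at h
    nlinarith [h]
  -- second derivative of W tends to 0 at +∞
  have hV₁d : Differentiable ℝ V₁ := hV₁.differentiable (by norm_num)
  have hV₂d : Differentiable ℝ V₂ := hV₂.differentiable (by norm_num)
  have hV₁'d : Differentiable ℝ (deriv V₁) :=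
    ((contDiff_succ_iff_deriv.mp
      (hone ▸ hV₁ : ContDiff ℝ ((1:WithTop ℕ∞)+1) V₁)).2.2).differentiable one_ne_zero
  have hV₂'d : Differentiable ℝ (deriv V₂) :=
    ((contDiff_succ_iff_deriv.mp
      (hone ▸ hV₂ : ContDiff ℝ ((1:WithTop ℕ∞)+1) V₂)).2.2).differentiable one_ne_zero
  have hW' : deriv W = fun x => χ₂ * deriv V₂ x - χ₁ * deriv V₁ x := by
    funext x
    exact (((hV₂d x).hasDerivAt.const_mul χ₂).sub ((hV₁d x).hasDerivAt.const_mul χ₁)).deriv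
  have hW'' : ∀ x, deriv (deriv W) x
      = χ₂ * deriv (deriv V₂) x - χ₁ * deriv (deriv V₁) x := by
    intro x
    rw [hW']
    exact (((hV₂'d x).hasDerivAt.const_mul χ₂).sub ((hV₁'d x).hasDerivAt.const_mul χ₁)).deriv
  have hV₁'' : ∀ x, deriv (deriv V₁) x = lam₁ * V₁ x - μ₁ * U x - c * τ * deriv V₁ x := by
    intro x; linarith [heqV₁ x]
  have hV₂'' : ∀ x, deriv (deriv V₂) x = lam₂ * V₂ x - μ₂ * U x - c * τ * deriv V₂ x := by
    intro x; linarith [heqV₂ x]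
  have hW''top : Tendsto (fun x => deriv (deriv W) x) atTop (nhds 0) := by
    have h2 : Tendsto (fun x => χ₂ * (lam₂ * V₂ x - μ₂ * U x - c * τ * deriv V₂ x)
        - χ₁ * (lam₁ * V₁ x - μ₁ * U x - c * τ * deriv V₁ x)) atTop (nhds 0) := by
      have := ((((hV₂top.const_mul lam₂).sub (hUtop.const_mul μ₂)).sub
          (hV₂'top.const_mul (c*τ))).const_mul χ₂).sub
          ((((hV₁top.const_mul lam₁).sub (hUtop.const_mul μ₁)).sub
          (hV₁'top.const_mul (c*τ))).const_mul χ₁)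
      simpa using this
    apply h2.congr
    intro x
    rw [hW'' x, hV₁'' x, hV₂'' x]
  have hqtop : Tendsto (fun x => deriv (deriv W) x + a - b * U x) atTop (nhds a) := by
    have := (hW''top.add_const a).sub (hUtop.const_mul b)
    simpa using this
  obtain ⟨X₀, hX₀⟩ : ∃ X₀, ∀ x, X₀ ≤ x → 0 < deriv (deriv W) x + a - b * U x :=
    eventually_atTop.mp (hqtop.eventually_const_lt ha)
  -- positivity of U
  have hPc : Continuous (fun x => c + deriv W x) := continuous_const.add hW'cont
  have hQc : Continuous (fun x => deriv (deriv W) x + a - b * U x) :=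
    (hW''c.add continuous_const).sub (continuous_const.mul hUd.continuous)
  have hpos : ∀ x, 0 < U x :=
    U_pos_aux hPc hQc hUd hU'd hU'c hode hUnn hUbot (div_pos ha hb)
  -- critical points of U in [X₀, ∞) are strict local maxima
  have hcrit : ∀ t, X₀ ≤ t → deriv U t = 0 → deriv (deriv U) t < 0 := by
    intro t ht h0
    rw [hode t, h0]
    have h1 : 0 < (deriv (deriv W) t + a - b * U t) * U t :=
      mul_pos (hX₀ t ht) (hpos t)
    nlinarith
  exact antitone_aux hU.continuous hUd hU'd hU'c hpos hUtop hcrit
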